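/- Let 0 < δ < 1/2 and let C ≥ 1 be an integer. For all z with ν h(z) ≤ δ (i.e. assuming Σ-weights bounded below): Σ_{k=0}^{C} (∏_{i=0}^{k−1}(1 − i/C)) · δ^{−k} ≥ Σ_{k=0}^{⌊δC⌋} ((1−δ)/δ)^k. Consequently this sum tends to +∞ as C → ∞. -/
import Mathlib


open Real Filter

theorem stmt_13 (δ : ℝ) (hδ0 : 0 < δ) (hδ : δ < 1 / 2)
    (S : ℕ → ℝ)
    (hS : ∀ C : ℕ, S C = ∑ k ∈ Finset.range (C + 1),
        (∏ i ∈ Finset.range k, (1 - (i : ℝ) / C)) * (1 / δ) ^ k) :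
    (∀ C : ℕ, 1 ≤ C →
      ∑ k ∈ Finset.range (⌊δ * C⌋₊ + 1), ((1 - δ) / δ) ^ k ≤ S C) ∧
    Tendsto S atTop atTop := by
  have hδ1 : δ < 1 := by linarith
  set r : ℝ := (1 - δ) / δ with hr
  have hr1 : 1 < r := by
    rw [hr, lt_div_iff₀ hδ0]; linarith
  have hr0 : 0 ≤ r := by linarith
  have key : ∀ C : ℕ, 1 ≤ C →
      ∑ k ∈ Finset.range (⌊δ * C⌋₊ + 1), r ^ k ≤ S C := by
    intro C hC
    rw [hS]
    have hCpos : (0:ℝ) < C := by exact_mod_cast hC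
    have hfloor : ⌊δ * C⌋₊ ≤ C := by
      have h1 : δ * C ≤ (C : ℝ) := by nlinarith
      calc ⌊δ * C⌋₊ ≤ ⌊(C:ℝ)⌋₊ := Nat.floor_le_floor h1
        _ = C := Nat.floor_natCast C
    have step1 : ∑ k ∈ Finset.range (⌊δ * C⌋₊ + 1), r ^ k ≤
        ∑ k ∈ Finset.range (⌊δ * C⌋₊ + 1),
          (∏ i ∈ Finset.range k, (1 - (i : ℝ) / C)) * (1 / δ) ^ k := by
      apply Finset.sum_le_sum
      intro k hk
      rw [Finset.mem_range] at hk
      have hterm : r ^ k = (∏ i ∈ Finset.range k, (1 - δ)) * (1 / δ) ^ k := by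
        rw [Finset.prod_const, Finset.card_range, hr, div_pow, div_eq_mul_inv, one_div, inv_pow]
      rw [hterm]
      apply mul_le_mul_of_nonneg_right _ (by positivity)
      apply Finset.prod_le_prod
      · intro i _; linarith
      · intro i hi
        rw [Finset.mem_range] at hi
        have hik : i < ⌊δ * C⌋₊ := lt_of_lt_of_le hi (Nat.lt_succ_iff.mp hk)
        have : (i : ℝ) < δ * C := by
          calc (i : ℝ) < (⌊δ * C⌋₊ : ℝ) := by exact_mod_cast hik
            _ ≤ δ * C := Nat.floor_le (by positivity)
        have : (i : ℝ) / C < δ := by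
          rw [div_lt_iff₀ hCpos]; linarith
        linarith
    refine step1.trans ?_
    apply Finset.sum_le_sum_of_subset_of_nonneg
    · exact Finset.range_subset_range.mpr (by omega)
    · intro k hk _
      rw [Finset.mem_range] at hk
      have hk' : k ≤ C := Nat.lt_succ_iff.mp hk
      apply mul_nonneg _ (by positivity)
      apply Finset.prod_nonneg
      intro i hi
      rw [Finset.mem_range] at hi
      have : (i : ℝ) < C := by exact_mod_cast lt_of_lt_of_le hi hk'
      have : (i : ℝ) / C < 1 := by rw [div_lt_one hCpos]; exact this
      linarith
  refine ⟨key, ?_⟩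
  have hg : Tendsto (fun C : ℕ => r ^ ⌊δ * (C:ℝ)⌋₊) atTop atTop := by
    apply (tendsto_pow_atTop_atTop_of_one_lt hr1).comp
    apply tendsto_nat_floor_atTop.comp
    exact (tendsto_natCast_atTop_atTop).const_mul_atTop hδ0
  apply tendsto_atTop_mono' atTop ?_ hg
  filter_upwards [eventually_ge_atTop 1] with C hC
  refine le_trans ?_ (key C hC)
  exact Finset.single_le_sum (f := fun k => r ^ k)
    (fun i _ => pow_nonneg hr0 i) (Finset.self_mem_range_succ _)
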